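/- Let d ≥ 1 and let U = V + g satisfy assumptions (A0) and (A1) with C₁ = 1, and take inverse temperature β = 1. Then for every a ∈ ℝ^{2d} and all indices i ≠ j in {1,…,2d}: Cov_{ν_a}( V'(a_i − ·), V'(a_j − ·) ) ≥ 1/(4d·C₂). -/

import Mathlib

open MeasureTheory Real Filter Topology
open scoped NNReal ENNReal

noncomputable section

/-- Boltzmann weight of the single odd site given the `2d` neighbouring values `a`. -/
def siteWeight (β : ℝ) (d : ℕ) (U : ℝ → ℝ) (a : Fin (2*d) → ℝ) (t : ℝ) : ℝ :=
  Real.exp (-(2*β) * ∑ k, U (a k - t))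

/-- Normalising constant `Z_a`. -/
def Zsite (β : ℝ) (d : ℕ) (U : ℝ → ℝ) (a : Fin (2*d) → ℝ) : ℝ :=
  ∫ t : ℝ, siteWeight β d U a t

/-- Single-site measure `ν_a`. -/
def nuSite (β : ℝ) (d : ℕ) (U : ℝ → ℝ) (a : Fin (2*d) → ℝ) : Measure ℝ :=
  volume.withDensity fun t => ENNReal.ofReal (siteWeight β d U a t / Zsite β d U a)

/-- Coarse-grained potential `F(a) = -log Z_a`. -/
def Fcg (β : ℝ) (d : ℕ) (U : ℝ → ℝ) (a : Fin (2*d) → ℝ) : ℝ :=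
  - Real.log (Zsite β d U a)

/-- Covariance of two functions under a measure on `ℝ`. -/
def covM (ν : Measure ℝ) (f g : ℝ → ℝ) : ℝ :=
  (∫ t, f t * g t ∂ν) - (∫ t, f t ∂ν) * (∫ t, g t ∂ν)

/-- Variance of the identity function under a measure on `ℝ`. -/
def varId (ν : Measure ℝ) : ℝ := covM ν (fun t => t) (fun t => t)

/-- First partial derivative. -/
def pd {n : ℕ} (Φ : (Fin n → ℝ) → ℝ) (i : Fin n) (a : Fin n → ℝ) : ℝ :=
  fderiv ℝ Φ a (Pi.single i 1)

/-- Second partial derivative. -/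
def pd2 {n : ℕ} (Φ : (Fin n → ℝ) → ℝ) (i j : Fin n) (a : Fin n → ℝ) : ℝ :=
  fderiv ℝ (fun x => fderiv ℝ Φ x (Pi.single i 1)) a (Pi.single j 1)

/-- derivative upper bound gives Lipschitz-type upper bound -/
lemma derivUB {φ : ℝ → ℝ} (hφ : Differentiable ℝ φ) {c : ℝ} (h : ∀ x, deriv φ x ≤ c)
    {x y : ℝ} (hxy : y ≤ x) : φ x - φ y ≤ c * (x - y) := by
  have hmono : Monotone (fun x => c * x - φ x) := by
    apply monotone_of_deriv_nonneg
    · exact fun x => (((hasDerivAt_id x).const_mul c).sub (hφ x).hasDerivAt).differentiableAt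
    · intro x
      have hd : HasDerivAt (fun x : ℝ => c * x - φ x) (c * 1 - deriv φ x) x :=
        ((hasDerivAt_id x).const_mul c).sub (hφ x).hasDerivAt
      rw [hd.deriv]; linarith [h x]
  have := hmono hxy
  simp only [] at this
  nlinarith

lemma derivLB {φ : ℝ → ℝ} (hφ : Differentiable ℝ φ) {c : ℝ} (h : ∀ x, c ≤ deriv φ x)
    {x y : ℝ} (hxy : y ≤ x) : c * (x - y) ≤ φ x - φ y := by
  have := derivUB hφ.neg (c := -c) (fun x => by
    rw [deriv.neg]; linarith [h x]) hxy
  simp only [Pi.neg_apply] at this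
  nlinarith

/-- linear growth from bounded derivative -/
lemma growth_of_deriv {φ : ℝ → ℝ} (hφ : Differentiable ℝ φ) {c : ℝ}
    (h : ∀ x, |deriv φ x| ≤ c) : ∀ x, |φ x| ≤ |φ 0| + c * |x| := by
  intro x
  rcases le_total 0 x with hx | hx
  · have h1 := derivUB hφ (c := c) (fun x => (abs_le.mp (h x)).2) hx
    have h2 := derivLB hφ (c := -c) (fun x => (abs_le.mp (h x)).1) hx
    rw [abs_of_nonneg hx]
    cases abs_cases (φ x) with
    | inl h3 => cases abs_cases (φ 0) with
      | inl h4 => nlinarith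
      | inr h4 => nlinarith
    | inr h3 => cases abs_cases (φ 0) with
      | inl h4 => nlinarith
      | inr h4 => nlinarith
  · have h1 := derivUB hφ (c := c) (fun x => (abs_le.mp (h x)).2) hx
    have h2 := derivLB hφ (c := -c) (fun x => (abs_le.mp (h x)).1) hx
    rw [abs_of_nonpos hx]
    cases abs_cases (φ x) with
    | inl h3 => cases abs_cases (φ 0) with
      | inl h4 => nlinarith
      | inr h4 => nlinarith
    | inr h3 => cases abs_cases (φ 0) with
      | inl h4 => nlinarith
      | inr h4 => nlinarith

def LinGrowth (φ : ℝ → ℝ) : Prop := ∃ c, 0 ≤ c ∧ ∀ t, |φ t| ≤ c * (1 + |t|)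

def QuadGrowth (φ : ℝ → ℝ) : Prop := ∃ c, 0 ≤ c ∧ ∀ t, |φ t| ≤ c * (1 + t ^ 2)

lemma LinGrowth.const (c : ℝ) : LinGrowth (fun _ => c) :=
  ⟨|c|, abs_nonneg c, fun t => by nlinarith [abs_nonneg t, abs_nonneg c]⟩

lemma LinGrowth.id : LinGrowth (fun t => t) :=
  ⟨1, zero_le_one, fun t => by nlinarith [abs_nonneg t]⟩

lemma LinGrowth.add {φ ψ : ℝ → ℝ} (hφ : LinGrowth φ) (hψ : LinGrowth ψ) :
    LinGrowth (fun t => φ t + ψ t) := by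
  obtain ⟨c, hc, h⟩ := hφ; obtain ⟨c', hc', h'⟩ := hψ
  exact ⟨c + c', by linarith, fun t => by
    have := abs_add_le (φ t) (ψ t); have := h t; have := h' t; nlinarith [abs_nonneg t]⟩

lemma LinGrowth.const_mul {φ : ℝ → ℝ} (hφ : LinGrowth φ) (c : ℝ) :
    LinGrowth (fun t => c * φ t) := by
  obtain ⟨c', hc', h⟩ := hφ
  refine ⟨|c| * c', by positivity, fun t => ?_⟩
  rw [abs_mul]
  calc |c| * |φ t| ≤ |c| * (c' * (1 + |t|)) := by
        exact mul_le_mul_of_nonneg_left (h t) (abs_nonneg c)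
    _ = |c| * c' * (1 + |t|) := by ring

lemma LinGrowth.comp_const_sub {φ : ℝ → ℝ} (hφ : LinGrowth φ) (x0 : ℝ) :
    LinGrowth (fun t => φ (x0 - t)) := by
  obtain ⟨c, hc, h⟩ := hφ
  refine ⟨c * (1 + |x0|), by positivity, fun t => ?_⟩
  have h1 := h (x0 - t)
  have h2 : |x0 - t| ≤ |x0| + |t| := abs_sub x0 t
  show |φ (x0 - t)| ≤ c * (1 + |x0|) * (1 + |t|)
  nlinarith [abs_nonneg t, abs_nonneg x0,
    mul_nonneg hc (mul_nonneg (abs_nonneg x0) (abs_nonneg t))]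

lemma LinGrowth.sum {ι : Type*} (s : Finset ι) (φ : ι → ℝ → ℝ)
    (h : ∀ k ∈ s, LinGrowth (φ k)) : LinGrowth (fun t => ∑ k ∈ s, φ k t) := by
  classical
  induction s using Finset.cons_induction with
  | empty => simpa using LinGrowth.const 0
  | cons k s hk ih =>
    simp only [Finset.sum_cons]
    exact (h k (Finset.mem_cons_self k s)).add
      (ih fun j hj => h j (Finset.mem_cons_of_mem hj))

lemma LinGrowth.quad {φ : ℝ → ℝ} (hφ : LinGrowth φ) : QuadGrowth φ := by
  obtain ⟨c, hc, h⟩ := hφ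
  refine ⟨2 * c, by linarith, fun t => ?_⟩
  have := h t
  have h2 : |t| ≤ 1 + t ^ 2 := by nlinarith [sq_abs t, abs_nonneg t]
  nlinarith

lemma LinGrowth.mul {φ ψ : ℝ → ℝ} (hφ : LinGrowth φ) (hψ : LinGrowth ψ) :
    QuadGrowth (fun t => φ t * ψ t) := by
  obtain ⟨c, hc, h⟩ := hφ; obtain ⟨c', hc', h'⟩ := hψ
  refine ⟨2 * (c * c'), by positivity, fun t => ?_⟩
  rw [abs_mul]
  have h1 := h t; have h2 := h' t
  have h3 : |φ t| * |ψ t| ≤ (c * (1 + |t|)) * (c' * (1 + |t|)) :=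
    mul_le_mul h1 h2 (abs_nonneg _) (by positivity)
  have h4 : (1 + |t|) ^ 2 ≤ 2 * (1 + t ^ 2) := by
    nlinarith [sq_abs t, sq_nonneg (|t| - 1)]
  calc |φ t| * |ψ t| ≤ c * (1 + |t|) * (c' * (1 + |t|)) := h3
    _ = (c * c') * (1 + |t|) ^ 2 := by ring
    _ ≤ (c * c') * (2 * (1 + t ^ 2)) :=
        mul_le_mul_of_nonneg_left h4 (mul_nonneg hc hc')
    _ = 2 * (c * c') * (1 + t ^ 2) := by ring

lemma gauss_poly_integrable {b : ℝ} (hb : 0 < b) (x0 : ℝ) :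
    Integrable (fun t : ℝ => (1 + t ^ 2) * Real.exp (-b * (t - x0) ^ 2)) := by
  have base : Integrable (fun t : ℝ => (1 + t ^ 2) * Real.exp (-b * t ^ 2)) := by
    have h1 : Integrable (fun t : ℝ => Real.exp (-b * t ^ 2)) := integrable_exp_neg_mul_sq hb
    have h2 : Integrable (fun t : ℝ => t ^ 2 * Real.exp (-b * t ^ 2)) := by
      have := integrable_rpow_mul_exp_neg_mul_sq hb (s := 2) (by norm_num)
      simpa [Real.rpow_two] using this
    simpa [add_mul, one_mul, Pi.add_def] using h1.add h2
  have shifted : Integrable (fun t : ℝ => (1 + (t - x0) ^ 2) * Real.exp (-b * (t - x0) ^ 2)) :=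
    base.comp_sub_right x0
  apply (shifted.const_mul (2 * (1 + x0 ^ 2))).mono'
  · apply Continuous.aestronglyMeasurable; continuity
  · filter_upwards with t
    have hexp : (0:ℝ) < Real.exp (-b * (t - x0) ^ 2) := Real.exp_pos _
    rw [Real.norm_eq_abs, abs_mul, abs_of_nonneg (by positivity : (0:ℝ) ≤ 1 + t ^ 2),
      abs_of_nonneg hexp.le]
    have key : 1 + t ^ 2 ≤ 2 * (1 + x0 ^ 2) * (1 + (t - x0) ^ 2) := by
      nlinarith [sq_nonneg (t - 2 * x0), mul_nonneg (sq_nonneg x0) (sq_nonneg (t - x0))]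
    calc (1 + t ^ 2) * rexp (-b * (t - x0) ^ 2)
        ≤ (2 * (1 + x0 ^ 2) * (1 + (t - x0) ^ 2)) * rexp (-b * (t - x0) ^ 2) :=
          mul_le_mul_of_nonneg_right key hexp.le
      _ = 2 * (1 + x0 ^ 2) * ((1 + (t - x0) ^ 2) * rexp (-b * (t - x0) ^ 2)) := by ring

lemma tendsto_gauss_aux {b : ℝ} (hb : 0 < b) (y0 : ℝ) :
    Tendsto (fun y : ℝ => (1 + (y + y0) ^ 2) * Real.exp (-b * y ^ 2)) atTop (𝓝 0) := by
  have hsq : Tendsto (fun y : ℝ => b * y ^ 2) atTop atTop :=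
    (tendsto_pow_atTop two_ne_zero).const_mul_atTop hb
  have h2 : Tendsto (fun y : ℝ => (b * y ^ 2) * Real.exp (-(b * y ^ 2))) atTop (𝓝 0) := by
    have := (tendsto_pow_mul_exp_neg_atTop_nhds_zero 1).comp hsq
    simpa [Function.comp_def] using this
  have hg : Tendsto (fun y : ℝ => (5 / b) * ((b * y ^ 2) * Real.exp (-(b * y ^ 2)))) atTop (𝓝 0) := by
    simpa using h2.const_mul (5 / b)
  apply squeeze_zero_norm' _ hg
  · filter_upwards [eventually_ge_atTop (max 1 |y0|)] with y hy
    have hy1 : 1 ≤ y := le_trans (le_max_left _ _) hy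
    have hy0 : |y0| ≤ y := le_trans (le_max_right _ _) hy
    obtain ⟨hy0a, hy0b⟩ := abs_le.mp (le_refl |y0|)
    have E : (0:ℝ) < Real.exp (-(b * y ^ 2)) := Real.exp_pos _
    have hpoly : 1 + (y + y0) ^ 2 ≤ 5 * y ^ 2 := by nlinarith
    have heq : (5 / b) * ((b * y ^ 2) * Real.exp (-(b * y ^ 2)))
        = 5 * y ^ 2 * Real.exp (-(b * y ^ 2)) := by
      field_simp
    rw [heq, Real.norm_eq_abs]
    have : -b * y ^ 2 = -(b * y ^ 2) := by ring
    rw [this, abs_of_nonneg (by positivity)]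
    exact mul_le_mul_of_nonneg_right hpoly E.le

lemma tendsto_gauss_atTop {b : ℝ} (hb : 0 < b) (x0 : ℝ) :
    Tendsto (fun t : ℝ => (1 + t ^ 2) * Real.exp (-b * (t - x0) ^ 2)) atTop (𝓝 0) := by
  have := (tendsto_gauss_aux hb x0).comp (tendsto_atTop_add_const_right atTop (-x0) tendsto_id)
  apply this.congr
  intro t
  simp only [Function.comp, id_eq]
  ring_nf

lemma tendsto_gauss_atBot {b : ℝ} (hb : 0 < b) (x0 : ℝ) :
    Tendsto (fun t : ℝ => (1 + t ^ 2) * Real.exp (-b * (t - x0) ^ 2)) atBot (𝓝 0) := by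
  have := (tendsto_gauss_atTop hb (-x0)).comp tendsto_neg_atBot_atTop
  apply this.congr
  intro t
  simp only [Function.comp, id_eq]
  ring_nf

/-- whole-line FTC with limits at infinity -/
lemma integral_eq_of_tendsto_boundary {F F' : ℝ → ℝ} (hF : ∀ t, HasDerivAt F (F' t) t)
    (hF'c : Continuous F') (hint : Integrable F') {Lb Lt : ℝ}
    (hbot : Tendsto F atBot (𝓝 Lb)) (htop : Tendsto F atTop (𝓝 Lt)) :
    ∫ t, F' t = Lt - Lb := by
  have hnat : Tendsto (fun n : ℕ => (n : ℝ)) atTop atTop := tendsto_natCast_atTop_atTop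
  have hnegnat : Tendsto (fun n : ℕ => -(n : ℝ)) atTop atBot := tendsto_neg_atBot_iff.mpr hnat
  have h1 : Tendsto (fun n : ℕ => ∫ x in (-(n:ℝ))..(n:ℝ), F' x) atTop (𝓝 (∫ t, F' t)) :=
    intervalIntegral_tendsto_integral hint hnegnat hnat
  have h2 : ∀ n : ℕ, ∫ x in (-(n:ℝ))..(n:ℝ), F' x = F n - F (-(n:ℝ)) := fun n =>
    intervalIntegral.integral_eq_sub_of_hasDerivAt (fun x _ => hF x)
      (hF'c.intervalIntegrable _ _)
  have h3 : Tendsto (fun n : ℕ => F n - F (-(n:ℝ))) atTop (𝓝 (Lt - Lb)) :=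
    (htop.comp hnat).sub (hbot.comp hnegnat)
  exact tendsto_nhds_unique (h1.congr h2) h3

/-- Expand a covariance as a double integral over the product measure. -/
lemma cov_prod_eq {μ : Measure ℝ} [IsProbabilityMeasure μ] {f g : ℝ → ℝ}
    (hf : Integrable f μ) (hg : Integrable g μ) (hfg : Integrable (fun t => f t * g t) μ) :
    ∫ p : ℝ × ℝ, (f p.1 - f p.2) * (g p.1 - g p.2) ∂(μ.prod μ)
      = 2 * ((∫ t, f t * g t ∂μ) - (∫ t, f t ∂μ) * (∫ t, g t ∂μ)) := by
  have h1 : Integrable (fun p : ℝ × ℝ => f p.1 * g p.2) (μ.prod μ) := hf.mul_prod hg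
  have h2 : Integrable (fun p : ℝ × ℝ => g p.1 * f p.2) (μ.prod μ) := hg.mul_prod hf
  have h3 : Integrable (fun p : ℝ × ℝ => (f p.1 * g p.1) * (1 : ℝ)) (μ.prod μ) :=
    hfg.mul_prod (integrable_const 1)
  have h4 : Integrable (fun p : ℝ × ℝ => (1 : ℝ) * (f p.2 * g p.2)) (μ.prod μ) :=
    (integrable_const (1:ℝ)).mul_prod hfg
  have expand : (fun p : ℝ × ℝ => (f p.1 - f p.2) * (g p.1 - g p.2))
      = fun p : ℝ × ℝ => (((f p.1 * g p.1) * (1 : ℝ) + (1 : ℝ) * (f p.2 * g p.2))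
          - f p.1 * g p.2) - g p.1 * f p.2 := by
    funext p; ring
  have hA : Integrable (fun p : ℝ × ℝ => f p.1 * g p.1 * 1 + 1 * (f p.2 * g p.2)) (μ.prod μ) :=
    h3.add h4
  have hB : Integrable
      (fun p : ℝ × ℝ => f p.1 * g p.1 * 1 + 1 * (f p.2 * g p.2) - f p.1 * g p.2) (μ.prod μ) :=
    hA.sub h1
  rw [expand, integral_sub hB h2, integral_sub hA h1, integral_add h3 h4]
  have e3 : ∫ p : ℝ × ℝ, (f p.1 * g p.1) * (1 : ℝ) ∂(μ.prod μ)
      = (∫ t, f t * g t ∂μ) * ∫ _t : ℝ, (1 : ℝ) ∂μ :=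
    integral_prod_mul (fun t => f t * g t) (fun _ => (1 : ℝ))
  have e4 : ∫ p : ℝ × ℝ, (1 : ℝ) * (f p.2 * g p.2) ∂(μ.prod μ)
      = (∫ _t : ℝ, (1 : ℝ) ∂μ) * ∫ t, f t * g t ∂μ :=
    integral_prod_mul (fun _ => (1 : ℝ)) (fun t => f t * g t)
  have e1 : ∫ p : ℝ × ℝ, f p.1 * g p.2 ∂(μ.prod μ) = (∫ t, f t ∂μ) * ∫ t, g t ∂μ :=
    integral_prod_mul f g
  have e2 : ∫ p : ℝ × ℝ, g p.1 * f p.2 ∂(μ.prod μ) = (∫ t, g t ∂μ) * ∫ t, f t ∂μ :=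
    integral_prod_mul g f
  rw [e1, e2, e3, e4]
  simp [integral_const]
  ring


/-- linear growth from globally bounded derivative -/
lemma lin_of_deriv_bound {φ : ℝ → ℝ} (hφ : Differentiable ℝ φ) {c : ℝ} (hc : 0 ≤ c)
    (h : ∀ x, |deriv φ x| ≤ c) : LinGrowth φ := by
  refine ⟨|φ 0| + c, by positivity, fun t => ?_⟩
  have := growth_of_deriv hφ h t
  nlinarith [abs_nonneg t, abs_nonneg (φ 0)]

lemma key1_lemma {V : ℝ → ℝ} (hVd1 : Differentiable ℝ (deriv V))
    (hlow : ∀ x, (1:ℝ) ≤ deriv (deriv V) x) (ci cj : ℝ) (p : ℝ × ℝ) :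
    (p.1 - p.2)^2 ≤ (deriv V (ci - p.1) - deriv V (ci - p.2))
      * (deriv V (cj - p.1) - deriv V (cj - p.2)) := by
  have keyV : ∀ (c s t : ℝ), t ≤ s → s - t ≤ deriv V (c - t) - deriv V (c - s) := by
    intro c s t hts
    have h1 : c - s ≤ c - t := by linarith
    have := derivLB (c := 1) hVd1 hlow h1
    linarith
  rcases le_total p.2 p.1 with h | h
  · have hu := keyV ci p.1 p.2 h
    have hv := keyV cj p.1 p.2 h
    have h0 : (0:ℝ) ≤ p.1 - p.2 := sub_nonneg.mpr h
    have hprod := mul_le_mul hu hv h0 (le_trans h0 hu)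
    nlinarith [hprod]
  · have hu := keyV ci p.2 p.1 h
    have hv := keyV cj p.2 p.1 h
    have h0 : (0:ℝ) ≤ p.2 - p.1 := sub_nonneg.mpr h
    have hprod := mul_le_mul hu hv h0 (le_trans h0 hu)
    nlinarith [hprod]

lemma key2_lemma {n : ℕ} {UD : ℝ → ℝ} (hUDd : Differentiable ℝ UD) {C₂ : ℝ}
    (hle : ∀ x, deriv UD x ≤ C₂) (a : Fin n → ℝ) (p : ℝ × ℝ) :
    (p.1 - p.2) * ((-2 * ∑ k, UD (a k - p.1)) - (-2 * ∑ k, UD (a k - p.2)))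
      ≤ (2*(n:ℝ)*C₂) * (p.1 - p.2)^2 := by
  have keyHD : ∀ s t : ℝ, t ≤ s →
      (-2 * ∑ k, UD (a k - s)) - (-2 * ∑ k, UD (a k - t)) ≤ (2*(n:ℝ)*C₂) * (s - t) := by
    intro s t hts
    have hterm : ∀ k : Fin n, UD (a k - t) - UD (a k - s) ≤ C₂ * (s - t) := by
      intro k
      have h1 : a k - s ≤ a k - t := by linarith
      have h2 := derivUB hUDd hle h1
      have heq : (a k - t) - (a k - s) = s - t := by ring
      rw [heq] at h2
      exact h2
    have hsum2 : ∑ k, (UD (a k - t) - UD (a k - s)) ≤ (n:ℝ) * (C₂ * (s - t)) := by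
      calc ∑ k, (UD (a k - t) - UD (a k - s)) ≤ ∑ _k : Fin n, C₂ * (s - t) :=
            Finset.sum_le_sum (fun k _ => hterm k)
        _ = (Finset.univ : Finset (Fin n)).card • (C₂ * (s - t)) := by
            rw [Finset.sum_const]
        _ = (n:ℝ) * (C₂ * (s - t)) := by
            rw [Finset.card_univ, Fintype.card_fin, nsmul_eq_mul]
    have hsplit : (-2 * ∑ k, UD (a k - s)) - (-2 * ∑ k, UD (a k - t))
        = 2 * ∑ k, (UD (a k - t) - UD (a k - s)) := by
      rw [Finset.sum_sub_distrib]
      ring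
    rw [hsplit]
    linarith
  rcases le_total p.2 p.1 with h | h
  · have h1 := keyHD p.1 p.2 h
    have h0 : (0:ℝ) ≤ p.1 - p.2 := sub_nonneg.mpr h
    nlinarith [mul_le_mul_of_nonneg_left h1 h0]
  · have h1 := keyHD p.2 p.1 h
    have h0 : (0:ℝ) ≤ p.2 - p.1 := sub_nonneg.mpr h
    nlinarith [mul_le_mul_of_nonneg_left h1 h0]


/-- **Statement 17** (lower bound (4.18) at `β = 1`, `C₁ = 1`). -/
theorem statement17
    {d : ℕ} {A B C₀ C₂ : ℝ} {U V g : ℝ → ℝ}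
    (hd : 1 ≤ d)
    -- (A0)
    (hUcont : Continuous U) (hA : 0 < A) (hA0 : ∀ η : ℝ, A * η ^ 2 - B ≤ U η)
    -- (A1) with C₁ = 1
    (hsum : ∀ s, U s = V s + g s)
    (hV : ContDiff ℝ 2 V) (hg : ContDiff ℝ 2 g)
    (hC₂ : 1 < C₂) (hC₂₀ : C₂ < C₀)
    (hV'' : ∀ s, 1 ≤ deriv (deriv V) s ∧ deriv (deriv V) s ≤ C₂)
    (hg'' : ∀ s, -C₀ ≤ deriv (deriv g) s ∧ deriv (deriv g) s ≤ 0) :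
    ∀ (a : Fin (2*d) → ℝ) (i j : Fin (2*d)), i ≠ j →
      1/(4*d*C₂) ≤ covM (nuSite 1 d U a)
        (fun t => deriv V (a i - t)) (fun t => deriv V (a j - t)) := by

  intro a i j hij
  -- ## basic constants
  have hd1 : (1:ℝ) ≤ (d:ℝ) := by exact_mod_cast hd
  have hC₂0 : (0:ℝ) < C₂ := by linarith
  have hC₀0 : (0:ℝ) < C₀ := by linarith
  have hL : (0:ℝ) < 4*(d:ℝ)*C₂ := by nlinarith
  set L : ℝ := 4*(d:ℝ)*C₂ with hLdef
  have k0 : Fin (2*d) := ⟨0, by omega⟩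
  -- ## smoothness facts
  have hVd : Differentiable ℝ V := hV.differentiable two_ne_zero
  have hgd : Differentiable ℝ g := hg.differentiable two_ne_zero
  have hV2 : ContDiff ℝ (1+1) V := by
    convert hV using 2
    norm_num
  have hg2 : ContDiff ℝ (1+1) g := by
    convert hg using 2
    norm_num
  have hVd1 : Differentiable ℝ (deriv V) :=
    (contDiff_succ_iff_deriv.mp hV2).2.2.differentiable one_ne_zero
  have hgd1 : Differentiable ℝ (deriv g) :=
    (contDiff_succ_iff_deriv.mp hg2).2.2.differentiable one_ne_zero
  have hVc1 : Continuous (deriv V) := hV.continuous_deriv one_le_two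
  have hgc1 : Continuous (deriv g) := hg.continuous_deriv one_le_two
  -- U as a function
  have hUfun : U = fun x => V x + g x := funext hsum
  have hUD : Differentiable ℝ U := by rw [hUfun]; exact hVd.add hgd
  set UD : ℝ → ℝ := fun x => deriv V x + deriv g x with hUDdef
  have hUDc : Continuous UD := hVc1.add hgc1
  have hUderiv : ∀ x, HasDerivAt U (UD x) x := by
    intro x
    rw [hUfun]
    exact ((hVd x).hasDerivAt).add ((hgd x).hasDerivAt)
  have hUDd : Differentiable ℝ UD := hVd1.add hgd1
  have hUDderiv : ∀ x, deriv UD x = deriv (deriv V) x + deriv (deriv g) x := by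
    intro x
    exact deriv_add (hVd1 x) (hgd1 x)
  have hUD'le : ∀ x, deriv UD x ≤ C₂ := by
    intro x
    rw [hUDderiv x]
    have := (hV'' x).2; have := (hg'' x).2; linarith
  have hUD'abs : ∀ x, |deriv UD x| ≤ C₂ + C₀ := by
    intro x
    rw [hUDderiv x, abs_le]
    have h1 := (hV'' x).1; have h2 := (hV'' x).2
    have h3 := (hg'' x).1; have h4 := (hg'' x).2
    constructor <;> linarith
  have hV''abs : ∀ x, |deriv (deriv V) x| ≤ C₂ := by
    intro x
    rw [abs_le]
    have h1 := (hV'' x).1; have h2 := (hV'' x).2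
    constructor <;> linarith
  -- ## the weight and its properties
  set w : ℝ → ℝ := siteWeight 1 d U a with hwdef
  have hweq : ∀ t, w t = Real.exp (-(2*1) * ∑ k, U (a k - t)) := fun t => rfl
  set Z : ℝ := Zsite 1 d U a with hZdef
  set ν : Measure ℝ := nuSite 1 d U a with hνdef
  have hwpos : ∀ t, 0 < w t := fun t => Real.exp_pos _
  have hw_cont : Continuous w := by
    rw [hwdef]
    unfold siteWeight
    exact Real.continuous_exp.comp (continuous_const.mul (continuous_finset_sum _
      fun k _ => hUcont.comp (continuous_const.sub continuous_id)))
  -- Gaussian bound on the weight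
  have hb2A : (0:ℝ) < 2*A := by linarith
  have hwbound : ∀ t, w t ≤ Real.exp (4*(d:ℝ)*B) * Real.exp (-(2*A) * (t - a k0)^2) := by
    intro t
    rw [hweq t, ← Real.exp_add]
    apply Real.exp_le_exp.mpr
    have hsum_lb : A * (a k0 - t)^2 - 2*(d:ℝ)*B ≤ ∑ k, U (a k - t) := by
      have h1 : ∑ k, (A * (a k - t)^2 - B) ≤ ∑ k, U (a k - t) :=
        Finset.sum_le_sum fun k _ => hA0 (a k - t)
      have h2 : A * (a k0 - t)^2 ≤ ∑ k, A * (a k - t)^2 :=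
        Finset.single_le_sum (f := fun k : Fin (2*d) => A * (a k - t)^2)
          (fun k _ => by positivity) (Finset.mem_univ k0)
      have h3 : ∑ k, (A * (a k - t)^2 - B) = (∑ k, A * (a k - t)^2) - (2*(d:ℝ))*B := by
        rw [Finset.sum_sub_distrib, Finset.sum_const, Finset.card_univ, Fintype.card_fin]
        push_cast; ring
      linarith
    have heq : (a k0 - t)^2 = (t - a k0)^2 := by ring
    rw [heq] at hsum_lb
    nlinarith
  -- ## linear growth facts
  have hLG_V' : LinGrowth (deriv V) := lin_of_deriv_bound hVd1 hC₂0.le hV''abs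
  have hLG_g' : LinGrowth (deriv g) := lin_of_deriv_bound hgd1 hC₀0.le (fun x => by
    rw [abs_le]; have h1 := (hg'' x).1; have h2 := (hg'' x).2; constructor <;> linarith)
  have hLG_UD : LinGrowth UD := hLG_V'.add hLG_g'
  set fi : ℝ → ℝ := fun t => deriv V (a i - t) with hfidef
  set fj : ℝ → ℝ := fun t => deriv V (a j - t) with hfjdef
  set HD : ℝ → ℝ := fun t => -2 * ∑ k, UD (a k - t) with hHDdef
  have hLG_fi : LinGrowth fi := hLG_V'.comp_const_sub (a i)
  have hLG_fj : LinGrowth fj := hLG_V'.comp_const_sub (a j)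
  have hLG_HD : LinGrowth HD :=
    (LinGrowth.sum Finset.univ _ (fun k _ => hLG_UD.comp_const_sub (a k))).const_mul (-2)
  have hLG_id : LinGrowth (fun t : ℝ => t) := LinGrowth.id
  have hLG_one : LinGrowth (fun _ : ℝ => (1:ℝ)) := LinGrowth.const 1
  have hfic : Continuous fi := hVc1.comp (continuous_const.sub continuous_id)
  have hfjc : Continuous fj := hVc1.comp (continuous_const.sub continuous_id)
  have hHDc : Continuous HD := continuous_const.mul (continuous_finset_sum _
    fun k _ => hUDc.comp (continuous_const.sub continuous_id))
  -- ## integrability of (quadratic growth) × weight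
  have hIw : ∀ (φ : ℝ → ℝ), Continuous φ → QuadGrowth φ →
      Integrable (fun t => φ t * w t) := by
    intro φ hφc hφq
    obtain ⟨c, hc, hq⟩ := hφq
    apply Integrable.mono'
      (((gauss_poly_integrable hb2A (a k0)).const_mul (c * Real.exp (4*(d:ℝ)*B))))
    · exact (hφc.mul hw_cont).aestronglyMeasurable
    · filter_upwards with t
      rw [Real.norm_eq_abs, abs_mul, abs_of_nonneg (hwpos t).le]
      calc |φ t| * w t ≤ (c * (1 + t^2)) * (Real.exp (4*(d:ℝ)*B) * Real.exp (-(2*A) * (t - a k0)^2)) := by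
            apply mul_le_mul (hq t) (hwbound t) (hwpos t).le (by positivity)
        _ = c * Real.exp (4*(d:ℝ)*B) * ((1 + t^2) * Real.exp (-(2*A) * (t - a k0)^2)) := by ring
  have hInt_w : Integrable w := by
    have := hIw (fun _ => (1:ℝ)) continuous_const hLG_one.quad
    simpa using this
  -- ## positivity of Z
  have hZeq : Z = ∫ t, w t := rfl
  have hZpos : 0 < Z := by
    rw [hZeq]
    rw [integral_pos_iff_support_of_nonneg (fun t => (hwpos t).le) hInt_w]
    have : Function.support w = Set.univ := by
      ext t; simp [Function.support, (hwpos t).ne']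
    rw [this]
    simp
  -- ## reduction of ν-integrals to Lebesgue integrals
  have hmeas : Measurable fun t => Real.toNNReal (w t / Z) :=
    (continuous_real_toNNReal.comp (hw_cont.div_const Z)).measurable
  have hν_eq : ν = volume.withDensity fun t => ((Real.toNNReal (w t / Z) : ℝ≥0) : ℝ≥0∞) := rfl
  have hnu_val : ∀ (φ : ℝ → ℝ), ∫ t, φ t ∂ν = (∫ t, φ t * w t) / Z := by
    intro φ
    rw [hν_eq, integral_withDensity_eq_integral_smul hmeas]
    rw [← integral_div]
    congr 1
    funext t
    rw [NNReal.smul_def, smul_eq_mul, Real.coe_toNNReal _ (div_nonneg (hwpos t).le hZpos.le)]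
    ring
  have hnu_intg : ∀ (φ : ℝ → ℝ), Continuous φ → QuadGrowth φ → Integrable φ ν := by
    intro φ hφc hφq
    rw [hνdef]
    unfold nuSite
    rw [integrable_withDensity_iff (by
        exact (ENNReal.measurable_ofReal.comp (hw_cont.div_const _).measurable))
      (by filter_upwards with t; exact ENNReal.ofReal_lt_top)]
    have heq : (fun t => φ t * (ENNReal.ofReal (siteWeight 1 d U a t / Zsite 1 d U a)).toReal)
        = fun t => (φ t * w t) / Z := by
      funext t
      rw [ENNReal.toReal_ofReal (div_nonneg (hwpos t).le hZpos.le)]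
      show φ t * (w t / Z) = φ t * w t / Z
      ring
    rw [heq]
    exact (hIw φ hφc hφq).div_const Z
  -- ## ν is a probability measure
  haveI : IsProbabilityMeasure ν := by
    constructor
    rw [hνdef]
    unfold nuSite
    rw [withDensity_apply _ MeasurableSet.univ, setLIntegral_univ]
    have h1 : Integrable (fun t => siteWeight 1 d U a t / Zsite 1 d U a) := hInt_w.div_const Z
    rw [← ofReal_integral_eq_lintegral_ofReal h1
      (by filter_upwards with t; exact div_nonneg (hwpos t).le hZpos.le)]
    have h2 : ∫ t, siteWeight 1 d U a t / Zsite 1 d U a = Z / Z := by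
      rw [integral_div]
      rfl
    rw [h2, div_self hZpos.ne']
    simp
  -- ## derivative of the weight
  have hw' : ∀ t, HasDerivAt w (-(HD t) * w t) t := by
    intro t
    have hin : ∀ k : Fin (2*d), HasDerivAt (fun t : ℝ => U (a k - t)) (UD (a k - t) * (-1)) t := by
      intro k
      have h1 : HasDerivAt (fun t : ℝ => a k - t) (-1) t := (hasDerivAt_id t).const_sub (a k)
      exact (hUderiv (a k - t)).comp t h1
    have hsum' : HasDerivAt (fun t : ℝ => ∑ k, U (a k - t)) (∑ k, UD (a k - t) * (-1)) t :=
      HasDerivAt.fun_sum (fun k _ => hin k)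
    have hmul : HasDerivAt (fun t : ℝ => -(2*1:ℝ) * ∑ k, U (a k - t))
        (-(2*1:ℝ) * ∑ k, UD (a k - t) * (-1)) t := hsum'.const_mul _
    have hexp := hmul.exp
    have heq1 : (fun t : ℝ => Real.exp (-(2*1:ℝ) * ∑ k, U (a k - t))) = w := by
      funext t; rw [hweq t]
    have heq2 : Real.exp (-(2*1:ℝ) * ∑ k, U (a k - t)) * (-(2*1:ℝ) * ∑ k, UD (a k - t) * (-1))
        = -(HD t) * w t := by
      rw [hweq t, hHDdef]
      rw [← Finset.sum_mul]
      ring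
    rw [heq1, heq2] at hexp
    exact hexp
  -- ## boundary limits
  set Gb : ℝ → ℝ := fun t => Real.exp (4*(d:ℝ)*B) * ((1 + t^2) * Real.exp (-(2*A) * (t - a k0)^2))
    with hGbdef
  have hGbtop : Tendsto Gb atTop (𝓝 0) := by
    have h0 := (tendsto_gauss_atTop hb2A (a k0)).const_mul (Real.exp (4*(d:ℝ)*B))
    rw [mul_zero] at h0
    exact h0
  have hGbbot : Tendsto Gb atBot (𝓝 0) := by
    have h0 := (tendsto_gauss_atBot hb2A (a k0)).const_mul (Real.exp (4*(d:ℝ)*B))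
    rw [mul_zero] at h0
    exact h0
  have hwGb : ∀ t, ‖w t‖ ≤ Gb t := by
    intro t
    rw [Real.norm_eq_abs, abs_of_nonneg (hwpos t).le, hGbdef]
    calc w t ≤ Real.exp (4*(d:ℝ)*B) * Real.exp (-(2*A) * (t - a k0)^2) := hwbound t
      _ ≤ Real.exp (4*(d:ℝ)*B) * ((1 + t^2) * Real.exp (-(2*A) * (t - a k0)^2)) := by
          have h1 : (0:ℝ) < Real.exp (-(2*A) * (t - a k0)^2) := Real.exp_pos _
          have h3 : (0:ℝ) ≤ Real.exp (4*(d:ℝ)*B) := (Real.exp_pos _).le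
          have h5 : Real.exp (-(2*A) * (t - a k0)^2)
              ≤ (1 + t^2) * Real.exp (-(2*A) * (t - a k0)^2) := by
            nlinarith [mul_nonneg (sq_nonneg t) h1.le]
          exact mul_le_mul_of_nonneg_left h5 h3
  have htwGb : ∀ t, ‖t * w t‖ ≤ Gb t := by
    intro t
    rw [Real.norm_eq_abs, abs_mul, abs_of_nonneg (hwpos t).le, hGbdef]
    have h1 : |t| * w t ≤ |t| * (Real.exp (4*(d:ℝ)*B) * Real.exp (-(2*A) * (t - a k0)^2)) :=
      mul_le_mul_of_nonneg_left (hwbound t) (abs_nonneg t)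
    have h2 : |t| ≤ 1 + t^2 := by nlinarith [sq_abs t, sq_nonneg (|t| - 1), abs_nonneg t]
    calc |t| * w t ≤ |t| * (Real.exp (4*(d:ℝ)*B) * Real.exp (-(2*A) * (t - a k0)^2)) := h1
      _ ≤ (1 + t^2) * (Real.exp (4*(d:ℝ)*B) * Real.exp (-(2*A) * (t - a k0)^2)) :=
          mul_le_mul_of_nonneg_right h2 (by positivity)
      _ = Real.exp (4*(d:ℝ)*B) * ((1 + t^2) * Real.exp (-(2*A) * (t - a k0)^2)) := by ring
  have hwtop : Tendsto w atTop (𝓝 0) := squeeze_zero_norm hwGb hGbtop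
  have hwbot : Tendsto w atBot (𝓝 0) := squeeze_zero_norm hwGb hGbbot
  have htwtop : Tendsto (fun t => t * w t) atTop (𝓝 0) := squeeze_zero_norm htwGb hGbtop
  have htwbot : Tendsto (fun t => t * w t) atBot (𝓝 0) := squeeze_zero_norm htwGb hGbbot
  -- ## integration by parts identities
  have hInt_HDw : Integrable (fun t => HD t * w t) := hIw HD hHDc hLG_HD.quad
  have hInt_negHDw : Integrable (fun t => -(HD t) * w t) := by
    have heq : (fun t => -(HD t) * w t) = fun t => -(HD t * w t) := by funext t; ring
    rw [heq]
    exact hInt_HDw.neg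
  have E1 : ∫ t, -(HD t) * w t = 0 := by
    have := integral_eq_of_tendsto_boundary hw' (hHDc.neg.mul hw_cont) hInt_negHDw hwbot hwtop
    simpa using this
  have hHDw0 : ∫ t, HD t * w t = 0 := by
    have : ∫ t, -(HD t) * w t = -∫ t, HD t * w t := by
      rw [← integral_neg]; congr 1; funext t; ring
    rw [this] at E1; linarith
  have hInt_tHDw : Integrable (fun t => (t * HD t) * w t) :=
    hIw (fun t => t * HD t) (continuous_id.mul hHDc) (hLG_id.mul hLG_HD)
  have htw' : ∀ t, HasDerivAt (fun t => t * w t) (1 * w t + t * (-(HD t) * w t)) t :=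
    fun t => (hasDerivAt_id t).mul (hw' t)
  have hInt_comb : Integrable (fun t => 1 * w t + t * (-(HD t) * w t)) := by
    have heq : (fun t => 1 * w t + t * (-(HD t) * w t)) = fun t => w t - (t * HD t) * w t := by
      funext t; ring
    rw [heq]
    exact hInt_w.sub hInt_tHDw
  have E2 : ∫ t, (1 * w t + t * (-(HD t) * w t)) = 0 := by
    have := integral_eq_of_tendsto_boundary htw'
      (by
        have : Continuous (fun t => 1 * w t + t * (-(HD t) * w t)) := by
          exact (continuous_const.mul hw_cont).add
            (continuous_id.mul (hHDc.neg.mul hw_cont))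
        exact this) hInt_comb htwbot htwtop
    simpa using this
  have htHDwZ : ∫ t, (t * HD t) * w t = Z := by
    have heq : (fun t => 1 * w t + t * (-(HD t) * w t)) = fun t => w t - (t * HD t) * w t := by
      funext t; ring
    rw [heq] at E2
    rw [integral_sub hInt_w hInt_tHDw] at E2
    rw [hZeq]; linarith
  -- ## covariance of id and HD equals 1
  have hHDν : ∫ t, HD t ∂ν = 0 := by rw [hnu_val HD, hHDw0, zero_div]
  have htHDν : ∫ t, t * HD t ∂ν = 1 := by
    rw [hnu_val (fun t => t * HD t), htHDwZ, div_self hZpos.ne']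
  have covIdHD : covM ν (fun t => t) HD = 1 := by
    unfold covM
    rw [htHDν, hHDν, mul_zero, sub_zero]
  -- ## integrability under ν
  have hIfi : Integrable fi ν := hnu_intg fi hfic hLG_fi.quad
  have hIfj : Integrable fj ν := hnu_intg fj hfjc hLG_fj.quad
  have hIfifj : Integrable (fun t => fi t * fj t) ν :=
    hnu_intg _ (hfic.mul hfjc) (hLG_fi.mul hLG_fj)
  have hIid : Integrable (fun t : ℝ => t) ν := hnu_intg _ continuous_id hLG_id.quad
  have hIHD : Integrable HD ν := hnu_intg HD hHDc hLG_HD.quad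
  have hIidHD : Integrable (fun t => t * HD t) ν :=
    hnu_intg _ (continuous_id.mul hHDc) (hLG_id.mul hLG_HD)
  have hIidsq : Integrable (fun t : ℝ => t * t) ν :=
    hnu_intg _ (continuous_id.mul continuous_id) (hLG_id.mul hLG_id)
  have hIone : Integrable (fun _ : ℝ => (1:ℝ)) ν := integrable_const 1
  -- ## product measure identities
  have S1eq : ∫ p : ℝ × ℝ, (fi p.1 - fi p.2) * (fj p.1 - fj p.2) ∂(ν.prod ν)
      = 2 * covM ν fi fj := cov_prod_eq hIfi hIfj hIfifj
  have S3eq : ∫ p : ℝ × ℝ, (p.1 - p.2) * (HD p.1 - HD p.2) ∂(ν.prod ν)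
      = 2 * covM ν (fun t => t) HD := cov_prod_eq hIid hIHD hIidHD
  -- integrability on the product
  have hP1 : Integrable (fun p : ℝ × ℝ => p.1 * p.1 * 1) (ν.prod ν) :=
    hIidsq.mul_prod hIone
  have hP2 : Integrable (fun p : ℝ × ℝ => 1 * (p.2 * p.2)) (ν.prod ν) :=
    hIone.mul_prod hIidsq
  have hP3 : Integrable (fun p : ℝ × ℝ => p.1 * p.2) (ν.prod ν) :=
    hIid.mul_prod hIid
  have hS2P : Integrable (fun p : ℝ × ℝ => (p.1 - p.2)^2) (ν.prod ν) := by
    have heq : (fun p : ℝ × ℝ => (p.1 - p.2)^2)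
        = fun p : ℝ × ℝ => (p.1 * p.1 * 1 + 1 * (p.2 * p.2)) - 2 * (p.1 * p.2) := by
      funext p; ring
    rw [heq]
    exact (hP1.add hP2).sub (hP3.const_mul 2)
  have hLS2P : Integrable (fun p : ℝ × ℝ => L * (p.1 - p.2)^2) (ν.prod ν) :=
    hS2P.const_mul L
  have hS3P : Integrable (fun p : ℝ × ℝ => (p.1 - p.2) * (HD p.1 - HD p.2)) (ν.prod ν) := by
    have heq : (fun p : ℝ × ℝ => (p.1 - p.2) * (HD p.1 - HD p.2))
        = fun p : ℝ × ℝ => (((p.1 * HD p.1) * 1 + 1 * (p.2 * HD p.2)) - p.1 * HD p.2)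
            - HD p.1 * p.2 := by
      funext p; ring
    rw [heq]
    exact ((((hIidHD.mul_prod hIone).add (hIone.mul_prod hIidHD)).sub
      (hIid.mul_prod hIHD))).sub (hIHD.mul_prod hIid)
  have hS1P : Integrable (fun p : ℝ × ℝ => (fi p.1 - fi p.2) * (fj p.1 - fj p.2)) (ν.prod ν) := by
    have heq : (fun p : ℝ × ℝ => (fi p.1 - fi p.2) * (fj p.1 - fj p.2))
        = fun p : ℝ × ℝ => (((fi p.1 * fj p.1) * 1 + 1 * (fi p.2 * fj p.2)) - fi p.1 * fj p.2)
            - fj p.1 * fi p.2 := by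
      funext p; ring
    rw [heq]
    exact ((((hIfifj.mul_prod hIone).add (hIone.mul_prod hIfifj)).sub
      (hIfi.mul_prod hIfj))).sub (hIfj.mul_prod hIfi)
  -- ## pointwise inequalities
  have key1 : ∀ p : ℝ × ℝ, (p.1 - p.2)^2 ≤ (fi p.1 - fi p.2) * (fj p.1 - fj p.2) := by
    intro p
    simp only [hfidef, hfjdef]
    exact key1_lemma hVd1 (fun x => (hV'' x).1) (a i) (a j) p
  have key2 : ∀ p : ℝ × ℝ, (p.1 - p.2) * (HD p.1 - HD p.2) ≤ L * (p.1 - p.2)^2 := by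
    intro p
    simp only [hHDdef]
    have h1 := key2_lemma hUDd hUD'le a p
    have hcast : 2*(((2*d : ℕ)):ℝ)*C₂ = L := by
      rw [hLdef]; push_cast; ring
    rwa [hcast] at h1
  -- ## putting everything together
  have T1 : ∫ p : ℝ × ℝ, (p.1 - p.2) * (HD p.1 - HD p.2) ∂(ν.prod ν)
      ≤ ∫ p : ℝ × ℝ, L * (p.1 - p.2)^2 ∂(ν.prod ν) :=
    integral_mono hS3P hLS2P key2
  have T1' : ∫ p : ℝ × ℝ, L * (p.1 - p.2)^2 ∂(ν.prod ν)
      = L * ∫ p : ℝ × ℝ, (p.1 - p.2)^2 ∂(ν.prod ν) := integral_const_mul L _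
  have T2 : ∫ p : ℝ × ℝ, (p.1 - p.2)^2 ∂(ν.prod ν)
      ≤ ∫ p : ℝ × ℝ, (fi p.1 - fi p.2) * (fj p.1 - fj p.2) ∂(ν.prod ν) :=
    integral_mono hS2P hS1P key1
  have hfinal : (2:ℝ) ≤ L * (2 * covM ν fi fj) := by
    have h2 : (2:ℝ) = ∫ p : ℝ × ℝ, (p.1 - p.2) * (HD p.1 - HD p.2) ∂(ν.prod ν) := by
      rw [S3eq, covIdHD]; norm_num
    have h3 : L * ∫ p : ℝ × ℝ, (p.1 - p.2)^2 ∂(ν.prod ν) ≤ L * (2 * covM ν fi fj) := by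
      apply mul_le_mul_of_nonneg_left _ hL.le
      rw [← S1eq]; exact T2
    linarith
  have hgoal : 1/L ≤ covM ν fi fj := by
    rw [div_le_iff₀ hL]
    nlinarith
  exact hgoal

end
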